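/- For every natural number m with m ≥ 1, as \(t \to 0^+\) one has \(\sum_{k=m}^{\infty} 2k\,e^{-4tk^2} = e^{-4m^2 t}\Big(\frac{1}{4t} + \big(m - \frac{1}{6}\big) + t\big(\frac{4}{3}m^2 - \frac{1}{15}\big)\Big) + O(t^2)\); that is, the difference of the left-hand side and the parenthesized expression times \(e^{-4m^2t}\) is \(O(t^2)\) as \(t \to 0^+\). -/

import Mathlib

open Asymptotics

namespace ThetaAsym

/-- monomial `c * x^a * u^b` -/
noncomputable def mono (x u : ℝ) (c : ℚ × ℕ × ℕ) : ℝ := (c.1 : ℝ) * x ^ c.2.1 * u ^ c.2.2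

/-- polynomial given by a list of monomials -/
noncomputable def P (l : List (ℚ × ℕ × ℕ)) (x u : ℝ) : ℝ := (l.map (mono x u)).sum

@[simp] lemma P_nil (x u : ℝ) : P [] x u = 0 := rfl

@[simp] lemma P_cons (c : ℚ × ℕ × ℕ) (l : List (ℚ × ℕ × ℕ)) (x u : ℝ) :
    P (c :: l) x u = mono x u c + P l x u := by simp [P]

/-- formal `u`-derivative of a monomial list -/
def dL (l : List (ℚ × ℕ × ℕ)) : List (ℚ × ℕ × ℕ) :=
  l.map fun c => (c.1 * c.2.2, c.2.1, c.2.2 - 1)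

lemma P_hasDerivAt (l : List (ℚ × ℕ × ℕ)) (x u : ℝ) :
    HasDerivAt (fun v => P l x v) (P (dL l) x u) u := by
  induction l with
  | nil => exact hasDerivAt_const u (0 : ℝ)
  | cons c l ih =>
    have hm : HasDerivAt (fun v : ℝ => mono x v c)
        (mono x u (c.1 * c.2.2, c.2.1, c.2.2 - 1)) u := by
      have h := (hasDerivAt_pow c.2.2 u).const_mul ((c.1 : ℝ) * x ^ c.2.1)
      have hfe : (fun v : ℝ => mono x v c) = fun v : ℝ => (c.1 : ℝ) * x ^ c.2.1 * v ^ c.2.2 := by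
        funext v; simp [mono]
      rw [hfe]
      refine h.congr_deriv ?_
      simp [mono]; push_cast; ring
    have h2 := hm.add ih
    have hfe : (fun v : ℝ => P (c :: l) x v) = fun v : ℝ => mono x v c + P l x v := by
      funext v; simp
    rw [hfe]
    exact h2.congr_deriv rfl

def l0 : List (ℚ × ℕ × ℕ) := [((-1:ℚ)/6, 0, 0), ((1:ℚ)/1, 0, 1), ((-1:ℚ)/60, 1, 0), ((1:ℚ)/3, 1, 2), ((1:ℚ)/15, 2, 2), ((-1:ℚ)/45, 3, 4)]
def l1 : List (ℚ × ℕ × ℕ) := [((1:ℚ)/1, 0, 0), ((-2:ℚ)/1, 0, 1), ((1:ℚ)/1, 1, 1), ((-2:ℚ)/1, 1, 2), ((1:ℚ)/6, 2, 1), ((-2:ℚ)/3, 2, 3), ((-2:ℚ)/9, 3, 3), ((2:ℚ)/45, 4, 5)]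
def l2 : List (ℚ × ℕ × ℕ) := [((-2:ℚ)/1, 0, 0), ((1:ℚ)/1, 1, 0), ((-6:ℚ)/1, 1, 1), ((4:ℚ)/1, 1, 2), ((1:ℚ)/6, 2, 0), ((-4:ℚ)/1, 2, 2), ((4:ℚ)/1, 2, 3), ((-1:ℚ)/1, 3, 2), ((4:ℚ)/3, 3, 4), ((2:ℚ)/3, 4, 4), ((-4:ℚ)/45, 5, 6)]
def l3 : List (ℚ × ℕ × ℕ) := [((-6:ℚ)/1, 1, 0), ((12:ℚ)/1, 1, 1), ((-10:ℚ)/1, 2, 1), ((24:ℚ)/1, 2, 2), ((-8:ℚ)/1, 2, 3), ((-7:ℚ)/3, 3, 1), ((40:ℚ)/3, 3, 3), ((-8:ℚ)/1, 3, 4), ((14:ℚ)/3, 4, 3), ((-8:ℚ)/3, 4, 5), ((-28:ℚ)/15, 5, 5), ((8:ℚ)/45, 6, 7)]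
def l4 : List (ℚ × ℕ × ℕ) := [((12:ℚ)/1, 1, 0), ((-10:ℚ)/1, 2, 0), ((60:ℚ)/1, 2, 1), ((-48:ℚ)/1, 2, 2), ((-7:ℚ)/3, 3, 0), ((60:ℚ)/1, 3, 2), ((-80:ℚ)/1, 3, 3), ((16:ℚ)/1, 3, 4), ((56:ℚ)/3, 4, 2), ((-40:ℚ)/1, 4, 4), ((16:ℚ)/1, 4, 5), ((-56:ℚ)/3, 5, 4), ((16:ℚ)/3, 5, 6), ((224:ℚ)/45, 6, 6), ((-16:ℚ)/45, 7, 8)]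
def l5 : List (ℚ × ℕ × ℕ) := [((60:ℚ)/1, 2, 0), ((-120:ℚ)/1, 2, 1), ((140:ℚ)/1, 3, 1), ((-360:ℚ)/1, 3, 2), ((160:ℚ)/1, 3, 3), ((42:ℚ)/1, 4, 1), ((-280:ℚ)/1, 4, 3), ((240:ℚ)/1, 4, 4), ((-32:ℚ)/1, 4, 5), ((-112:ℚ)/1, 5, 3), ((112:ℚ)/1, 5, 5), ((-32:ℚ)/1, 5, 6), ((336:ℚ)/5, 6, 5), ((-32:ℚ)/3, 6, 7), ((-64:ℚ)/5, 7, 7), ((32:ℚ)/45, 8, 9)]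
def l6 : List (ℚ × ℕ × ℕ) := [((-120:ℚ)/1, 2, 0), ((140:ℚ)/1, 3, 0), ((-840:ℚ)/1, 3, 1), ((720:ℚ)/1, 3, 2), ((42:ℚ)/1, 4, 0), ((-1120:ℚ)/1, 4, 2), ((1680:ℚ)/1, 4, 3), ((-480:ℚ)/1, 4, 4), ((-420:ℚ)/1, 5, 2), ((1120:ℚ)/1, 5, 4), ((-672:ℚ)/1, 5, 5), ((64:ℚ)/1, 5, 6), ((560:ℚ)/1, 6, 4), ((-896:ℚ)/3, 6, 6), ((64:ℚ)/1, 6, 7), ((-224:ℚ)/1, 7, 6), ((64:ℚ)/3, 7, 8), ((32:ℚ)/1, 8, 8), ((-64:ℚ)/45, 9, 10)]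
def l7 : List (ℚ × ℕ × ℕ) := [((-840:ℚ)/1, 3, 0), ((1680:ℚ)/1, 3, 1), ((-2520:ℚ)/1, 4, 1), ((6720:ℚ)/1, 4, 2), ((-3360:ℚ)/1, 4, 3), ((-924:ℚ)/1, 5, 1), ((6720:ℚ)/1, 5, 3), ((-6720:ℚ)/1, 5, 4), ((1344:ℚ)/1, 5, 5), ((3080:ℚ)/1, 6, 3), ((-4032:ℚ)/1, 6, 5), ((1792:ℚ)/1, 6, 6), ((-128:ℚ)/1, 6, 7), ((-2464:ℚ)/1, 7, 5), ((768:ℚ)/1, 7, 7), ((-128:ℚ)/1, 7, 8), ((704:ℚ)/1, 8, 7), ((-128:ℚ)/3, 8, 9), ((-704:ℚ)/9, 9, 9), ((128:ℚ)/45, 10, 11)]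
def rPL : List (ℚ × ℕ × ℕ) := [((7:ℚ)/72, 1, 0), ((-7:ℚ)/18, 0, 1), ((7:ℚ)/120, 3, 0), ((7:ℚ)/20, 2, 1), ((-7:ℚ)/9, 1, 2), ((7:ℚ)/9, 0, 3), ((-7:ℚ)/12, 3, 2), ((-14:ℚ)/15, 2, 3), ((7:ℚ)/9, 1, 4), ((-14:ℚ)/45, 0, 5), ((7:ℚ)/9, 3, 4), ((14:ℚ)/25, 2, 5), ((-28:ℚ)/135, 1, 6), ((4:ℚ)/135, 0, 7), ((-14:ℚ)/45, 3, 6), ((-8:ℚ)/75, 2, 7), ((2:ℚ)/135, 1, 8), ((2:ℚ)/45, 3, 8), ((4:ℚ)/675, 2, 9), ((-4:ℚ)/2025, 3, 10)]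
def rQ7 : List (ℚ × ℕ × ℕ) := [((-840:ℚ)/1, 1, 0), ((1680:ℚ)/1, 0, 1), ((-2520:ℚ)/1, 2, 1), ((6720:ℚ)/1, 1, 2), ((-3360:ℚ)/1, 0, 3), ((-924:ℚ)/1, 4, 1), ((6720:ℚ)/1, 2, 3), ((-6720:ℚ)/1, 1, 4), ((1344:ℚ)/1, 0, 5), ((3080:ℚ)/1, 4, 3), ((-4032:ℚ)/1, 2, 5), ((1792:ℚ)/1, 1, 6), ((-128:ℚ)/1, 0, 7), ((-2464:ℚ)/1, 4, 5), ((768:ℚ)/1, 2, 7), ((-128:ℚ)/1, 1, 8), ((704:ℚ)/1, 4, 7), ((-128:ℚ)/3, 2, 9), ((-704:ℚ)/9, 4, 9), ((128:ℚ)/45, 4, 11)]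

/-- `Φ_l(u) = e^{-x u²} · P l x u` -/
noncomputable def Phi (x : ℝ) (l : List (ℚ × ℕ × ℕ)) (u : ℝ) : ℝ :=
  Real.exp (-(x * u ^ 2)) * P l x u

/-- the tail-approximation function, with its `1/x` term -/
noncomputable def Phi0 (x u : ℝ) : ℝ := Real.exp (-(x * u ^ 2)) * (x⁻¹ + P l0 x u)

lemma exp_hasDerivAt (x u : ℝ) :
    HasDerivAt (fun v : ℝ => Real.exp (-(x * v ^ 2))) (Real.exp (-(x * u ^ 2)) * (-(x * (2 * u)))) u := by
  have h1 : HasDerivAt (fun v : ℝ => -(x * v ^ 2)) (-(x * (2 * u))) u := by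
    have := ((hasDerivAt_pow 2 u).const_mul x).neg
    exact this.congr_deriv (by norm_num)
  exact h1.exp

lemma Phi_hasDerivAt (x : ℝ) (l l' : List (ℚ × ℕ × ℕ))
    (h : ∀ u : ℝ, P l' x u = P (dL l) x u - 2 * x * u * P l x u) (u : ℝ) :
    HasDerivAt (Phi x l) (Phi x l' u) u := by
  have h2 := (exp_hasDerivAt x u).mul (P_hasDerivAt l x u)
  have hfe : Phi x l = fun v => Real.exp (-(x * v ^ 2)) * P l x v := rfl
  rw [hfe]
  refine h2.congr_deriv ?_
  simp only [Phi, h u]; ring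

lemma Phi0_hasDerivAt {x : ℝ} (hx : x ≠ 0) (u : ℝ) :
    HasDerivAt (Phi0 x) (Phi x l1 u) u := by
  have h2 := (exp_hasDerivAt x u).mul ((hasDerivAt_const u (x⁻¹ : ℝ)).add (P_hasDerivAt l0 x u))
  have hfe : Phi0 x = fun v => Real.exp (-(x * v ^ 2)) * (x⁻¹ + P l0 x v) := rfl
  rw [hfe]
  refine h2.congr_deriv ?_
  have : P l1 x u = P (dL l0) x u - 2 * u - 2 * x * u * P l0 x u := by
    simp [l0, l1, dL, mono]; norm_num; ring
  rw [Phi, this]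
  simp only [Pi.add_apply]
  have hxx : x * x⁻¹ = 1 := mul_inv_cancel₀ hx
  field_simp
  ring

lemma step2 : ∀ u : ℝ, P l2 x u = P (dL l1) x u - 2 * x * u * P l1 x u := by
  intro u; simp [l1, l2, dL, mono]; norm_num; ring
lemma step3 : ∀ u : ℝ, P l3 x u = P (dL l2) x u - 2 * x * u * P l2 x u := by
  intro u; simp [l2, l3, dL, mono]; norm_num; ring
lemma step4 : ∀ u : ℝ, P l4 x u = P (dL l3) x u - 2 * x * u * P l3 x u := by
  intro u; simp [l3, l4, dL, mono]; norm_num; ring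
lemma step5 : ∀ u : ℝ, P l5 x u = P (dL l4) x u - 2 * x * u * P l4 x u := by
  intro u; simp [l4, l5, dL, mono]; norm_num; ring
lemma step6 : ∀ u : ℝ, P l6 x u = P (dL l5) x u - 2 * x * u * P l5 x u := by
  intro u; simp [l5, l6, dL, mono]; norm_num; ring
lemma step7 : ∀ u : ℝ, P l7 x u = P (dL l6) x u - 2 * x * u * P l6 x u := by
  intro u; simp [l6, l7, dL, mono]; norm_num; ring


lemma P_continuous (l : List (ℚ × ℕ × ℕ)) (x : ℝ) : Continuous (fun u => P l x u) :=
  continuous_iff_continuousAt.mpr fun u => (P_hasDerivAt l x u).continuousAt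

lemma Phi_continuous (x : ℝ) (l : List (ℚ × ℕ × ℕ)) : Continuous (Phi x l) := by
  unfold Phi
  exact (Real.continuous_exp.comp (continuous_const.mul (continuous_pow 2)).neg).mul
    (P_continuous l x)

lemma ibp_step (f f' : ℝ → ℝ) (hf : ∀ s, HasDerivAt f (f' s) s) (hc : Continuous f')
    (a : ℝ) (n : ℕ) :
    (∫ s in a..(a + 1), (a + 1 - s) ^ n / (n.factorial : ℝ) * f s)
      = f a / ((n + 1).factorial : ℝ)
        + ∫ s in a..(a + 1), (a + 1 - s) ^ (n + 1) / ((n + 1).factorial : ℝ) * f' s := by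
  have hfc : Continuous f := by
    have : Differentiable ℝ f := fun s => (hf s).differentiableAt
    exact this.continuous
  have hv : ∀ s : ℝ, HasDerivAt (fun s => -((a + 1 - s) ^ (n + 1)) / ((n + 1).factorial : ℝ))
      ((a + 1 - s) ^ n / (n.factorial : ℝ)) s := by
    intro s
    have h0 : HasDerivAt (fun s : ℝ => a + 1 - s) (-1) s := by
      simpa using (hasDerivAt_id s).const_sub (a + 1)
    have h1 := ((h0.pow (n + 1)).neg).div_const ((n + 1).factorial : ℝ)
    refine h1.congr_deriv ?_
    have hfac : ((n + 1).factorial : ℝ) = ((n + 1) : ℝ) * (n.factorial : ℝ) := by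
      push_cast [Nat.factorial_succ]; ring
    rw [hfac]
    have hnn : ((n : ℝ) + 1) ≠ 0 := by positivity
    field_simp
    push_cast
    ring
  have key := intervalIntegral.integral_mul_deriv_eq_deriv_mul (a := a) (b := a + 1)
    (u := f) (u' := f') (v := fun s => -((a + 1 - s) ^ (n + 1)) / ((n + 1).factorial : ℝ))
    (v' := fun s => (a + 1 - s) ^ n / (n.factorial : ℝ))
    (fun s _ => hf s) (fun s _ => hv s)
    (hc.intervalIntegrable _ _)
    ((Continuous.div_const (((continuous_const.sub continuous_id).pow n)) _).intervalIntegrable _ _)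
  have h2 : ∀ s : ℝ, f s * ((a + 1 - s) ^ n / (n.factorial : ℝ))
      = (a + 1 - s) ^ n / (n.factorial : ℝ) * f s := fun s => mul_comm _ _
  calc (∫ s in a..(a + 1), (a + 1 - s) ^ n / (n.factorial : ℝ) * f s)
      = ∫ s in a..(a + 1), f s * ((a + 1 - s) ^ n / (n.factorial : ℝ)) := by
        simp_rw [h2]
    _ = f (a+1) * (-((a + 1 - (a+1)) ^ (n + 1)) / ((n + 1).factorial : ℝ))
        - f a * (-((a + 1 - a) ^ (n + 1)) / ((n + 1).factorial : ℝ))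
        - ∫ s in a..(a + 1), f' s * (-((a + 1 - s) ^ (n + 1)) / ((n + 1).factorial : ℝ)) := key
    _ = f a / ((n + 1).factorial : ℝ)
        + ∫ s in a..(a + 1), (a + 1 - s) ^ (n + 1) / ((n + 1).factorial : ℝ) * f' s := by
        have h3 : (∫ s in a..a + 1, f' s * (-((a + 1 - s) ^ (n + 1)) / ((n + 1).factorial : ℝ)))
            = -∫ s in a..a + 1, (a + 1 - s) ^ (n + 1) / ((n + 1).factorial : ℝ) * f' s := by
          rw [← intervalIntegral.integral_neg]
          congr 1; funext s; ring
        rw [h3]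
        have h4 : a + 1 - (a + 1) = (0 : ℝ) := by ring
        rw [h4, zero_pow (Nat.succ_ne_zero n)]
        ring


/-- kernel integral -/
noncomputable def J (x a : ℝ) (n : ℕ) (l : List (ℚ × ℕ × ℕ)) : ℝ :=
  ∫ s in a..a + 1, (a + 1 - s) ^ n / (n.factorial : ℝ) * Phi x l s

lemma J_step (x a : ℝ) (n : ℕ) (l l' : List (ℚ × ℕ × ℕ))
    (hd : ∀ u : ℝ, HasDerivAt (Phi x l) (Phi x l' u) u) :
    J x a n l = Phi x l a / ((n + 1).factorial : ℝ) + J x a (n + 1) l' :=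
  ibp_step (Phi x l) (Phi x l') hd (Phi_continuous x l') a n

lemma taylor_chain {x : ℝ} (hx : x ≠ 0) (a : ℝ) :
    Phi0 x (a + 1) - Phi0 x a
      = Phi x l1 a / 1 + Phi x l2 a / 2 + Phi x l3 a / 6 + Phi x l4 a / 24
        + Phi x l5 a / 120 + Phi x l6 a / 720 + J x a 6 l7 := by
  have d2 := Phi_hasDerivAt x l1 l2 step2
  have d3 := Phi_hasDerivAt x l2 l3 step3
  have d4 := Phi_hasDerivAt x l3 l4 step4
  have d5 := Phi_hasDerivAt x l4 l5 step5
  have d6 := Phi_hasDerivAt x l5 l6 step6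
  have d7 := Phi_hasDerivAt x l6 l7 step7
  have h0 : Phi0 x (a + 1) - Phi0 x a = J x a 0 l1 := by
    have base := intervalIntegral.integral_eq_sub_of_hasDerivAt
      (f := Phi0 x) (f' := Phi x l1) (a := a) (b := a + 1)
      (fun s _ => Phi0_hasDerivAt hx s) ((Phi_continuous x l1).intervalIntegrable _ _)
    rw [← base]
    apply intervalIntegral.integral_congr
    intro s _
    norm_num [Nat.factorial]
  have h1 := J_step x a 0 l1 l2 d2
  have h2 := J_step x a 1 l2 l3 d3
  have h3 := J_step x a 2 l3 l4 d4
  have h4 := J_step x a 3 l4 l5 d5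
  have h5 := J_step x a 4 l5 l6 d6
  have h6 := J_step x a 5 l6 l7 d7
  norm_num [Nat.factorial] at h1 h2 h3 h4 h5 h6
  rw [h0, h1, h2, h3, h4, h5, h6]
  ring


lemma PL_scaled (s u : ℝ) :
    2 * u + (P l1 (s ^ 2) u / 1 + P l2 (s ^ 2) u / 2 + P l3 (s ^ 2) u / 6
      + P l4 (s ^ 2) u / 24 + P l5 (s ^ 2) u / 120 + P l6 (s ^ 2) u / 720)
    = s ^ 5 * P rPL s (s * u) := by
  simp [l1, l2, l3, l4, l5, l6, rPL, P, mono]; norm_num; ring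

lemma Q7_scaled (s u : ℝ) : P l7 (s ^ 2) u = s ^ 5 * P rQ7 s (s * u) := by
  simp [l7, rQ7, P, mono]; norm_num; ring

lemma P_le (l : List (ℚ × ℕ × ℕ)) {s y : ℝ} (hs0 : 0 ≤ s) (hs1 : s ≤ 1) (hy : 0 ≤ y)
    (hb : ∀ c ∈ l, c.2.2 ≤ 12) :
    |P l s y| ≤ (l.map fun c => |(c.1 : ℝ)|).sum * (1 + y ^ 12) := by
  induction l with
  | nil => simp
  | cons c l ih =>
    have hyb : y ^ c.2.2 ≤ 1 + y ^ 12 := by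
      rcases le_total y 1 with h | h
      · have : y ^ c.2.2 ≤ 1 := pow_le_one₀ hy h
        nlinarith [pow_nonneg hy 12]
      · have : y ^ c.2.2 ≤ y ^ 12 := pow_le_pow_right₀ h (hb c List.mem_cons_self)
        linarith
    have hmono : |mono s y c| ≤ |(c.1 : ℝ)| * (1 + y ^ 12) := by
      have : |mono s y c| = |(c.1 : ℝ)| * s ^ c.2.1 * y ^ c.2.2 := by
        rw [mono, abs_mul, abs_mul, abs_pow, abs_pow, abs_of_nonneg hs0, abs_of_nonneg hy]
      rw [this]
      have h1 : s ^ c.2.1 ≤ 1 := pow_le_one₀ hs0 hs1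
      have h2 : (0:ℝ) ≤ |(c.1 : ℝ)| := abs_nonneg _
      have h3 : (0:ℝ) ≤ y ^ c.2.2 := pow_nonneg hy _
      calc |(c.1 : ℝ)| * s ^ c.2.1 * y ^ c.2.2 ≤ |(c.1 : ℝ)| * 1 * y ^ c.2.2 := by
            apply mul_le_mul_of_nonneg_right _ h3
            exact mul_le_mul_of_nonneg_left h1 h2
        _ = |(c.1 : ℝ)| * y ^ c.2.2 := by ring
        _ ≤ |(c.1 : ℝ)| * (1 + y ^ 12) := mul_le_mul_of_nonneg_left hyb h2
    have ihl := ih (fun d hd => hb d (List.mem_cons_of_mem c hd))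
    calc |P (c :: l) s y| ≤ |mono s y c| + |P l s y| := by rw [P_cons]; exact abs_add_le _ _
      _ ≤ |(c.1 : ℝ)| * (1 + y ^ 12) + (l.map fun c => |(c.1 : ℝ)|).sum * (1 + y ^ 12) := by
          exact add_le_add hmono ihl
      _ = ((c :: l).map fun c => |(c.1 : ℝ)|).sum * (1 + y ^ 12) := by simp; ring

lemma rPL_K : ((rPL.map fun c => |(c.1 : ℝ)|).sum : ℝ) ≤ 8 := by norm_num [rPL, abs_of_nonneg]

lemma rQ7_K : ((rQ7.map fun c => |(c.1 : ℝ)|).sum : ℝ) ≤ 44048 := by norm_num [rQ7, abs_of_nonneg]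

lemma rPL_deg : ∀ c ∈ rPL, c.2.2 ≤ 12 := by decide

lemma rQ7_deg : ∀ c ∈ rQ7, c.2.2 ≤ 12 := by decide

lemma gauss_poly_bound {y : ℝ} (hy : 0 ≤ y) :
    (1 + y ^ 12) * Real.exp (-(y ^ 2)) ≤ 46081 * Real.exp (-(y ^ 2 / 2)) := by
  have h1 : y ^ 12 ≤ 46080 * Real.exp (y ^ 2 / 2) := by
    have h2 : (y ^ 2 / 2) ^ 6 / (Nat.factorial 6 : ℝ) ≤ Real.exp (y ^ 2 / 2) := by
      have := Real.sum_le_exp_of_nonneg (by positivity : (0:ℝ) ≤ y ^ 2 / 2) 7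
      calc (y ^ 2 / 2) ^ 6 / (Nat.factorial 6 : ℝ)
          ≤ ∑ i ∈ Finset.range 7, (y ^ 2 / 2) ^ i / (Nat.factorial i : ℝ) := by
            exact Finset.single_le_sum (f := fun i => (y ^ 2 / 2) ^ i / (Nat.factorial i : ℝ))
              (fun i _ => by positivity) (by norm_num)
        _ ≤ Real.exp (y ^ 2 / 2) := this
    have : (y ^ 2 / 2) ^ 6 / (Nat.factorial 6 : ℝ) = y ^ 12 / 46080 := by
      norm_num [Nat.factorial]; ring
    rw [this] at h2
    linarith
  have he : Real.exp (-(y ^ 2)) = Real.exp (-(y ^ 2 / 2)) * Real.exp (-(y ^ 2 / 2)) := by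
    rw [← Real.exp_add]; ring_nf
  have hp : Real.exp (-(y ^ 2 / 2)) ≤ 1 := Real.exp_le_one_iff.mpr (by nlinarith [sq_nonneg y])
  have hee : Real.exp (-(y ^ 2 / 2)) * Real.exp (y ^ 2 / 2) = 1 := by
    rw [← Real.exp_add]; simp
  have hpos : 0 < Real.exp (-(y ^ 2 / 2)) := Real.exp_pos _
  calc (1 + y ^ 12) * Real.exp (-(y ^ 2))
      = (Real.exp (-(y ^ 2 / 2)) + y ^ 12 * Real.exp (-(y ^ 2 / 2))) * Real.exp (-(y ^ 2 / 2)) := by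
        rw [he]; ring
    _ ≤ (1 + 46080) * Real.exp (-(y ^ 2 / 2)) := by
        apply mul_le_mul_of_nonneg_right _ hpos.le
        have : y ^ 12 * Real.exp (-(y ^ 2 / 2)) ≤ 46080 := by
          calc y ^ 12 * Real.exp (-(y ^ 2 / 2))
              ≤ 46080 * Real.exp (y ^ 2 / 2) * Real.exp (-(y ^ 2 / 2)) := by
                exact mul_le_mul_of_nonneg_right h1 hpos.le
            _ = 46080 := by rw [mul_assoc, mul_comm (Real.exp _), hee, mul_one]
        linarith
    _ = 46081 * Real.exp (-(y ^ 2 / 2)) := by norm_num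


lemma Phi7_bound {x : ℝ} (hx0 : 0 < x) (hx1 : x ≤ 1) {z : ℝ} (hz : 0 ≤ z) :
    |Phi x l7 z| ≤ Real.sqrt x ^ 5 * (44048 * 46081) * Real.exp (-(x * z ^ 2 / 2)) := by
  set s := Real.sqrt x with hs
  have hs2 : s ^ 2 = x := Real.sq_sqrt hx0.le
  have hs0 : 0 ≤ s := Real.sqrt_nonneg x
  have hs1 : s ≤ 1 := by nlinarith
  have hy : 0 ≤ s * z := mul_nonneg hs0 hz
  have hxz : x * z ^ 2 = (s * z) ^ 2 := by rw [← hs2]; ring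
  have h1 : |Phi x l7 z| = Real.exp (-(x * z ^ 2)) * (s ^ 5 * |P rQ7 s (s * z)|) := by
    rw [Phi, abs_mul, abs_of_pos (Real.exp_pos _), ← hs2, Q7_scaled, abs_mul, abs_pow,
      abs_of_nonneg hs0, hs2]
  rw [h1]
  have h2 : |P rQ7 s (s * z)| ≤ 44048 * (1 + (s * z) ^ 12) := by
    calc |P rQ7 s (s * z)| ≤ (rQ7.map fun c => |(c.1 : ℝ)|).sum * (1 + (s * z) ^ 12) :=
          P_le rQ7 hs0 hs1 hy rQ7_deg
      _ ≤ 44048 * (1 + (s * z) ^ 12) := by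
          apply mul_le_mul_of_nonneg_right rQ7_K
          positivity
  have h3 : (1 + (s * z) ^ 12) * Real.exp (-(x * z ^ 2)) ≤ 46081 * Real.exp (-(x * z ^ 2 / 2)) := by
    rw [hxz]
    have : (s * z) ^ 2 / 2 = (s * z) ^ 2 / 2 := rfl
    exact gauss_poly_bound hy
  have hexp : (0:ℝ) < Real.exp (-(x * z ^ 2)) := Real.exp_pos _
  have hs5 : (0:ℝ) ≤ s ^ 5 := by positivity
  calc Real.exp (-(x * z ^ 2)) * (s ^ 5 * |P rQ7 s (s * z)|)
      ≤ Real.exp (-(x * z ^ 2)) * (s ^ 5 * (44048 * (1 + (s * z) ^ 12))) := by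
        apply mul_le_mul_of_nonneg_left _ hexp.le
        exact mul_le_mul_of_nonneg_left h2 hs5
    _ = s ^ 5 * 44048 * ((1 + (s * z) ^ 12) * Real.exp (-(x * z ^ 2))) := by ring
    _ ≤ s ^ 5 * 44048 * (46081 * Real.exp (-(x * z ^ 2 / 2))) := by
        apply mul_le_mul_of_nonneg_left h3 (by positivity)
    _ = s ^ 5 * (44048 * 46081) * Real.exp (-(x * z ^ 2 / 2)) := by ring

lemma E_bound {x : ℝ} (hx0 : 0 < x) (hx1 : x ≤ 1) {u : ℝ} (hu : 0 ≤ u) :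
    |2 * u * Real.exp (-(x * u ^ 2)) - (Phi0 x u - Phi0 x (u + 1))|
      ≤ 3200000 * Real.sqrt x ^ 5 * Real.exp (-(x * u ^ 2 / 2)) := by
  set s := Real.sqrt x with hs
  have hs2 : s ^ 2 = x := Real.sq_sqrt hx0.le
  have hs0 : 0 ≤ s := Real.sqrt_nonneg x
  have hs1 : s ≤ 1 := by nlinarith
  have hy : 0 ≤ s * u := mul_nonneg hs0 hu
  have hxu : x * u ^ 2 = (s * u) ^ 2 := by rw [← hs2]; ring
  have tc := taylor_chain hx0.ne' u
  have hsplit : 2 * u * Real.exp (-(x * u ^ 2)) - (Phi0 x u - Phi0 x (u + 1))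
      = Real.exp (-(x * u ^ 2)) * (s ^ 5 * P rPL s (s * u)) + J x u 6 l7 := by
    have hmain : 2 * u * Real.exp (-(x * u ^ 2))
        + (Phi x l1 u / 1 + Phi x l2 u / 2 + Phi x l3 u / 6 + Phi x l4 u / 24
           + Phi x l5 u / 120 + Phi x l6 u / 720)
        = Real.exp (-(x * u ^ 2)) * (s ^ 5 * P rPL s (s * u)) := by
      have := PL_scaled s u
      rw [hs2] at this
      simp only [Phi]
      rw [← this]
      ring
    have : 2 * u * Real.exp (-(x * u ^ 2)) - (Phi0 x u - Phi0 x (u + 1))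
        = 2 * u * Real.exp (-(x * u ^ 2)) + (Phi0 x (u + 1) - Phi0 x u) := by ring
    rw [this, tc, ← hmain]
    ring
  rw [hsplit]
  have hJ : |J x u 6 l7| ≤ (44048 * 46081 / 720) * s ^ 5 * Real.exp (-(x * u ^ 2 / 2)) := by
    have hb : ∀ z ∈ Set.uIoc u (u + 1),
        ‖(u + 1 - z) ^ 6 / ((6).factorial : ℝ) * Phi x l7 z‖
          ≤ s ^ 5 * (44048 * 46081) / 720 * Real.exp (-(x * u ^ 2 / 2)) := by
      intro z hz
      rw [Set.uIoc_of_le (by linarith)] at hz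
      obtain ⟨hz1, hz2⟩ := hz
      have hz0 : 0 ≤ z := le_of_lt (lt_of_le_of_lt hu hz1)
      have hk : |(u + 1 - z) ^ 6 / ((6).factorial : ℝ)| ≤ 1 / 720 := by
        rw [abs_div]
        have h1 : |u + 1 - z| ≤ 1 := by rw [abs_le]; constructor <;> linarith
        have h2 : |(u + 1 - z) ^ 6| ≤ 1 := by
          rw [abs_pow]; exact pow_le_one₀ (abs_nonneg _) h1
        have : |((6).factorial : ℝ)| = 720 := by norm_num [Nat.factorial]
        rw [this]
        linarith
      have hphi := Phi7_bound hx0 hx1 hz0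
      have hmono : Real.exp (-(x * z ^ 2 / 2)) ≤ Real.exp (-(x * u ^ 2 / 2)) := by
        apply Real.exp_le_exp.mpr
        have : u ^ 2 ≤ z ^ 2 := by nlinarith
        nlinarith
      rw [Real.norm_eq_abs, abs_mul]
      calc |(u + 1 - z) ^ 6 / ((6).factorial : ℝ)| * |Phi x l7 z|
          ≤ (1 / 720) * (s ^ 5 * (44048 * 46081) * Real.exp (-(x * u ^ 2 / 2))) := by
            apply mul_le_mul hk _ (abs_nonneg _) (by norm_num)
            calc |Phi x l7 z| ≤ s ^ 5 * (44048 * 46081) * Real.exp (-(x * z ^ 2 / 2)) := hphi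
              _ ≤ s ^ 5 * (44048 * 46081) * Real.exp (-(x * u ^ 2 / 2)) := by
                  apply mul_le_mul_of_nonneg_left hmono (by positivity)
        _ = s ^ 5 * (44048 * 46081) / 720 * Real.exp (-(x * u ^ 2 / 2)) := by ring
    have := intervalIntegral.norm_integral_le_of_norm_le_const hb
    rw [Real.norm_eq_abs] at this
    calc |J x u 6 l7| ≤ s ^ 5 * (44048 * 46081) / 720 * Real.exp (-(x * u ^ 2 / 2)) * |u + 1 - u| := this
      _ = (44048 * 46081 / 720) * s ^ 5 * Real.exp (-(x * u ^ 2 / 2)) := by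
          have : |u + 1 - u| = 1 := by norm_num
          rw [this]; ring
  have hmain2 : |Real.exp (-(x * u ^ 2)) * (s ^ 5 * P rPL s (s * u))|
      ≤ (8 * 46081) * s ^ 5 * Real.exp (-(x * u ^ 2 / 2)) := by
    rw [abs_mul, abs_of_pos (Real.exp_pos _), abs_mul, abs_pow, abs_of_nonneg hs0]
    have h2 : |P rPL s (s * u)| ≤ 8 * (1 + (s * u) ^ 12) := by
      calc |P rPL s (s * u)| ≤ (rPL.map fun c => |(c.1 : ℝ)|).sum * (1 + (s * u) ^ 12) :=
            P_le rPL hs0 hs1 hy rPL_deg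
        _ ≤ 8 * (1 + (s * u) ^ 12) := by
            apply mul_le_mul_of_nonneg_right rPL_K; positivity
    have h3 : (1 + (s * u) ^ 12) * Real.exp (-(x * u ^ 2)) ≤ 46081 * Real.exp (-(x * u ^ 2 / 2)) := by
      rw [hxu]; exact gauss_poly_bound hy
    calc Real.exp (-(x * u ^ 2)) * (s ^ 5 * |P rPL s (s * u)|)
        ≤ Real.exp (-(x * u ^ 2)) * (s ^ 5 * (8 * (1 + (s * u) ^ 12))) := by
          apply mul_le_mul_of_nonneg_left _ (Real.exp_pos _).le
          exact mul_le_mul_of_nonneg_left h2 (by positivity)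
      _ = 8 * s ^ 5 * ((1 + (s * u) ^ 12) * Real.exp (-(x * u ^ 2))) := by ring
      _ ≤ 8 * s ^ 5 * (46081 * Real.exp (-(x * u ^ 2 / 2))) := by
          apply mul_le_mul_of_nonneg_left h3 (by positivity)
      _ = (8 * 46081) * s ^ 5 * Real.exp (-(x * u ^ 2 / 2)) := by ring
  calc |Real.exp (-(x * u ^ 2)) * (s ^ 5 * P rPL s (s * u)) + J x u 6 l7|
      ≤ |Real.exp (-(x * u ^ 2)) * (s ^ 5 * P rPL s (s * u))| + |J x u 6 l7| := abs_add_le _ _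
    _ ≤ (8 * 46081) * s ^ 5 * Real.exp (-(x * u ^ 2 / 2))
        + (44048 * 46081 / 720) * s ^ 5 * Real.exp (-(x * u ^ 2 / 2)) := add_le_add hmain2 hJ
    _ ≤ 3200000 * s ^ 5 * Real.exp (-(x * u ^ 2 / 2)) := by
        have h5 : (0:ℝ) ≤ s ^ 5 * Real.exp (-(x * u ^ 2 / 2)) := by positivity
        nlinarith


lemma sum_gauss {c : ℝ} (hc : 0 < c) (m : ℕ) (hm : 1 ≤ m) (n : ℕ) :
    ∑ j ∈ Finset.range n, Real.exp (-(c * ((m : ℝ) + j) ^ 2)) ≤ Real.sqrt (Real.pi / c) := by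
  have hint : MeasureTheory.Integrable (fun z : ℝ => Real.exp (-(c * z ^ 2))) := by
    have := integrable_exp_neg_mul_sq hc
    simpa [neg_mul] using this
  have hm1 : (1 : ℝ) ≤ (m : ℝ) := by exact_mod_cast hm
  set a : ℕ → ℝ := fun j => (m : ℝ) - 1 + j with ha
  have haj : ∀ j : ℕ, a j = (m : ℝ) - 1 + j := fun j => rfl
  have hterm : ∀ j : ℕ, Real.exp (-(c * ((m : ℝ) + j) ^ 2))
      ≤ ∫ z in a j..a (j + 1), Real.exp (-(c * z ^ 2)) := by
    intro j
    have hj0 : (0 : ℝ) ≤ (j : ℝ) := Nat.cast_nonneg j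
    have hab : a j ≤ a (j + 1) := by rw [haj, haj]; push_cast; linarith
    have hconst : (∫ _ in a j..a (j + 1), Real.exp (-(c * ((m : ℝ) + j) ^ 2)))
        = Real.exp (-(c * ((m : ℝ) + j) ^ 2)) := by
      rw [intervalIntegral.integral_const]
      have h1 : a (j + 1) - a j = 1 := by rw [haj, haj]; push_cast; ring
      rw [h1, one_smul]
    rw [← hconst]
    apply intervalIntegral.integral_mono_on hab intervalIntegrable_const
      (hint.intervalIntegrable)
    intro z hz
    obtain ⟨hz1, hz2⟩ := hz
    rw [haj] at hz1
    rw [haj] at hz2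
    push_cast at hz2
    apply Real.exp_le_exp.mpr
    have hz0 : 0 ≤ z := by linarith
    have hzm : z ≤ (m : ℝ) + j := by linarith
    have h2 : z ^ 2 ≤ ((m : ℝ) + j) ^ 2 := by nlinarith
    nlinarith [mul_le_mul_of_nonneg_left h2 hc.le]
  calc ∑ j ∈ Finset.range n, Real.exp (-(c * ((m : ℝ) + j) ^ 2))
      ≤ ∑ j ∈ Finset.range n, ∫ z in a j..a (j + 1), Real.exp (-(c * z ^ 2)) :=
        Finset.sum_le_sum fun j _ => hterm j
    _ = ∫ z in (a 0)..(a n), Real.exp (-(c * z ^ 2)) :=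
        intervalIntegral.sum_integral_adjacent_intervals fun k _ => hint.intervalIntegrable
    _ ≤ ∫ z : ℝ, Real.exp (-(c * z ^ 2)) := by
        rw [intervalIntegral.integral_of_le
          (by rw [haj, haj]; push_cast; linarith [Nat.cast_nonneg (α := ℝ) n])]
        exact MeasureTheory.setIntegral_le_integral hint
          (Filter.Eventually.of_forall fun z => (Real.exp_pos _).le)
    _ = Real.sqrt (Real.pi / c) := by
        have := integral_gaussian c
        simp_rw [neg_mul] at this
        exact this

lemma telescope (x : ℝ) (m : ℕ) (n : ℕ) :
    ∑ j ∈ Finset.range n, (2 * ((m : ℝ) + j) * Real.exp (-(x * ((m : ℝ) + j) ^ 2)))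
      = (Phi0 x m - Phi0 x ((m : ℝ) + n)) + ∑ j ∈ Finset.range n,
          (2 * ((m : ℝ) + j) * Real.exp (-(x * ((m : ℝ) + j) ^ 2))
            - (Phi0 x ((m : ℝ) + j) - Phi0 x (((m : ℝ) + j) + 1))) := by
  induction n with
  | zero => simp
  | succ n ih =>
    rw [Finset.sum_range_succ, Finset.sum_range_succ, ih]
    have harg : (m : ℝ) + ((n + 1 : ℕ) : ℝ) = ((m : ℝ) + n) + 1 := by push_cast; ring
    rw [harg]
    ring


lemma partial_bound {x : ℝ} (hx0 : 0 < x) (hx1 : x ≤ 1) {m : ℕ} (hm : 1 ≤ m) (n : ℕ) :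
    |∑ j ∈ Finset.range n, (2 * ((m : ℝ) + j) * Real.exp (-(x * ((m : ℝ) + j) ^ 2)))
      - (Phi0 x m - Phi0 x ((m : ℝ) + n))| ≤ 9600000 * x ^ 2 := by
  rw [telescope x m n, add_sub_cancel_left]
  have hstep : ∀ j ∈ Finset.range n,
      |2 * ((m : ℝ) + j) * Real.exp (-(x * ((m : ℝ) + j) ^ 2))
        - (Phi0 x ((m : ℝ) + j) - Phi0 x (((m : ℝ) + j) + 1))|
      ≤ 3200000 * Real.sqrt x ^ 5 * Real.exp (-(x / 2 * ((m : ℝ) + j) ^ 2)) := by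
    intro j _
    have hu : (0 : ℝ) ≤ (m : ℝ) + j := by positivity
    have h := E_bound hx0 hx1 hu
    have harg : -(x * ((m : ℝ) + j) ^ 2 / 2) = -(x / 2 * ((m : ℝ) + j) ^ 2) := by ring
    rwa [harg] at h
  calc |∑ j ∈ Finset.range n, (2 * ((m : ℝ) + j) * Real.exp (-(x * ((m : ℝ) + j) ^ 2))
            - (Phi0 x ((m : ℝ) + j) - Phi0 x (((m : ℝ) + j) + 1)))|
      ≤ ∑ j ∈ Finset.range n, |2 * ((m : ℝ) + j) * Real.exp (-(x * ((m : ℝ) + j) ^ 2))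
            - (Phi0 x ((m : ℝ) + j) - Phi0 x (((m : ℝ) + j) + 1))| :=
        Finset.abs_sum_le_sum_abs _ _
    _ ≤ ∑ j ∈ Finset.range n, 3200000 * Real.sqrt x ^ 5 * Real.exp (-(x / 2 * ((m : ℝ) + j) ^ 2)) :=
        Finset.sum_le_sum hstep
    _ = 3200000 * Real.sqrt x ^ 5
          * ∑ j ∈ Finset.range n, Real.exp (-(x / 2 * ((m : ℝ) + j) ^ 2)) := by
        rw [Finset.mul_sum]
    _ ≤ 3200000 * Real.sqrt x ^ 5 * Real.sqrt (Real.pi / (x / 2)) := by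
        apply mul_le_mul_of_nonneg_left (sum_gauss (by linarith) m hm n) (by positivity)
    _ ≤ 9600000 * x ^ 2 := by
        have h4 : Real.sqrt x ^ 4 = x ^ 2 := by
          rw [show Real.sqrt x ^ 4 = (Real.sqrt x ^ 2) ^ 2 by ring, Real.sq_sqrt hx0.le]
        have h5 : Real.sqrt x ^ 5 = x ^ 2 * Real.sqrt x := by
          rw [show Real.sqrt x ^ 5 = Real.sqrt x ^ 4 * Real.sqrt x by ring, h4]
        have e2 : Real.sqrt x * Real.sqrt (Real.pi / (x / 2)) = Real.sqrt (2 * Real.pi) := by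
          rw [← Real.sqrt_mul hx0.le]
          congr 1
          field_simp
        have e4 : Real.sqrt (2 * Real.pi) ≤ 3 := by
          have h9 : (2 : ℝ) * Real.pi ≤ 9 := by nlinarith [Real.pi_le_four]
          calc Real.sqrt (2 * Real.pi) ≤ Real.sqrt 9 := Real.sqrt_le_sqrt h9
            _ = 3 := by
                rw [show (9 : ℝ) = 3 ^ 2 by norm_num, Real.sqrt_sq (by norm_num : (0:ℝ) ≤ 3)]
        calc 3200000 * Real.sqrt x ^ 5 * Real.sqrt (Real.pi / (x / 2))
            = 3200000 * x ^ 2 * (Real.sqrt x * Real.sqrt (Real.pi / (x / 2))) := by rw [h5]; ring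
          _ = 3200000 * x ^ 2 * Real.sqrt (2 * Real.pi) := by rw [e2]
          _ ≤ 3200000 * x ^ 2 * 3 := by
              apply mul_le_mul_of_nonneg_left e4 (by positivity)
          _ ≤ 9600000 * x ^ 2 := by nlinarith [sq_nonneg x]

lemma l0_deg : ∀ c ∈ l0, c.2.2 ≤ 12 := by decide

lemma l0_K : ((l0.map fun c => |(c.1 : ℝ)|).sum : ℝ) ≤ 2 := by norm_num [l0, abs_of_nonneg]

lemma Phi0_le {x : ℝ} (hx0 : 0 < x) (hx1 : x ≤ 1) {u : ℝ} (hu : 0 ≤ u) :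
    |Phi0 x u| ≤ (x⁻¹ + 2 * (1 + u ^ 12)) * Real.exp (-(x * u ^ 2)) := by
  rw [Phi0, abs_mul, abs_of_pos (Real.exp_pos _), mul_comm (Real.exp (-(x * u ^ 2)))]
  apply mul_le_mul_of_nonneg_right _ (Real.exp_pos _).le
  calc |x⁻¹ + P l0 x u| ≤ |x⁻¹| + |P l0 x u| := abs_add_le _ _
    _ ≤ x⁻¹ + 2 * (1 + u ^ 12) := by
        apply add_le_add
        · rw [abs_of_nonneg (by positivity)]
        · calc |P l0 x u| ≤ (l0.map fun c => |(c.1 : ℝ)|).sum * (1 + u ^ 12) :=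
              P_le l0 hx0.le hx1 hu l0_deg
            _ ≤ 2 * (1 + u ^ 12) := by
                apply mul_le_mul_of_nonneg_right l0_K (by positivity)

lemma Phi0_tendsto {x : ℝ} (hx0 : 0 < x) (hx1 : x ≤ 1) (m : ℕ) :
    Filter.Tendsto (fun n : ℕ => Phi0 x ((m : ℝ) + n)) Filter.atTop (nhds 0) := by
  have hpow : Filter.Tendsto (fun u : ℝ => x * u ^ 2) Filter.atTop Filter.atTop :=
    (Filter.tendsto_pow_atTop (two_ne_zero)).const_mul_atTop hx0
  have t1 : Filter.Tendsto (fun u : ℝ => Real.exp (-(x * u ^ 2))) Filter.atTop (nhds 0) :=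
    Real.tendsto_exp_atBot.comp (Filter.tendsto_neg_atTop_atBot.comp hpow)
  have t0 := Real.tendsto_pow_mul_exp_neg_atTop_nhds_zero 6
  have t2 : Filter.Tendsto (fun u : ℝ => u ^ 12 * Real.exp (-(x * u ^ 2)))
      Filter.atTop (nhds 0) := by
    have t3 := (t0.comp hpow).mul_const ((x ^ 6)⁻¹)
    rw [zero_mul] at t3
    apply t3.congr
    intro u
    have hx6 : (x : ℝ) ^ 6 ≠ 0 := by positivity
    field_simp
    simp only [Function.comp_apply]; ring
  have hcomp : Filter.Tendsto (fun u : ℝ => (x⁻¹ + 2 * (1 + u ^ 12)) * Real.exp (-(x * u ^ 2)))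
      Filter.atTop (nhds 0) := by
    have := ((t1.const_mul (x⁻¹ + 2)).add (t2.const_mul 2))
    rw [mul_zero, mul_zero, add_zero] at this
    apply this.congr
    intro u
    ring
  have hnat : Filter.Tendsto (fun n : ℕ => (m : ℝ) + n) Filter.atTop Filter.atTop := by
    apply Filter.tendsto_atTop_mono (fun n => ?_) tendsto_natCast_atTop_atTop
    have : (0 : ℝ) ≤ (m : ℝ) := Nat.cast_nonneg m
    linarith
  apply squeeze_zero_norm (fun n => ?_) (hcomp.comp hnat)
  have hu : (0 : ℝ) ≤ (m : ℝ) + n := by positivity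
  simpa [Real.norm_eq_abs] using Phi0_le hx0 hx1 hu

lemma summ {x : ℝ} (hx0 : 0 < x) (m : ℕ) :
    Summable (fun j : ℕ => 2 * ((m : ℝ) + j) * Real.exp (-(x * ((m : ℝ) + j) ^ 2))) := by
  set r := Real.exp (-x) with hr
  have hrlt : ‖r‖ < 1 := by
    rw [Real.norm_eq_abs, abs_of_pos (Real.exp_pos _)]
    exact Real.exp_lt_one_iff.mpr (by linarith)
  have h1 : Summable (fun j : ℕ => (j : ℝ) ^ 1 * r ^ j) :=
    summable_pow_mul_geometric_of_norm_lt_one 1 hrlt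
  have h0 : Summable (fun j : ℕ => r ^ j) := summable_geometric_of_norm_lt_one hrlt
  refine Summable.of_nonneg_of_le (fun j => by positivity)
    (fun j => ?_) ((h0.mul_left (2 * (m : ℝ))).add (h1.mul_left 2))
  have hexp : Real.exp (-(x * ((m : ℝ) + j) ^ 2)) ≤ r ^ j := by
    rw [hr, ← Real.exp_nat_mul]
    apply Real.exp_le_exp.mpr
    have hj : (j : ℝ) ≤ (j : ℝ) ^ 2 := by
      exact_mod_cast Nat.le_self_pow two_ne_zero j
    have hm0 : (0 : ℝ) ≤ (m : ℝ) := Nat.cast_nonneg m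
    have hj0 : (0 : ℝ) ≤ (j : ℝ) := Nat.cast_nonneg j
    have h2 : (j : ℝ) ≤ ((m : ℝ) + j) ^ 2 := by nlinarith
    nlinarith [mul_le_mul_of_nonneg_left h2 hx0.le]
  calc 2 * ((m : ℝ) + j) * Real.exp (-(x * ((m : ℝ) + j) ^ 2))
      ≤ 2 * ((m : ℝ) + j) * r ^ j := by
        apply mul_le_mul_of_nonneg_left hexp (by positivity)
    _ = 2 * (m : ℝ) * r ^ j + 2 * ((j : ℝ) ^ 1 * r ^ j) := by ring

theorem key {x : ℝ} (hx0 : 0 < x) (hx1 : x ≤ 1) {m : ℕ} (hm : 1 ≤ m) :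
    |(∑' j : ℕ, 2 * ((m : ℝ) + j) * Real.exp (-(x * ((m : ℝ) + j) ^ 2))) - Phi0 x m|
      ≤ 9600000 * x ^ 2 := by
  have hsum := summ hx0 m
  have hpart := hsum.hasSum.tendsto_sum_nat
  have hphi := Phi0_tendsto hx0 hx1 m
  have hconst : Filter.Tendsto (fun _ : ℕ => Phi0 x (m : ℝ)) Filter.atTop (nhds (Phi0 x (m : ℝ))) :=
    tendsto_const_nhds
  have htend := ((hpart.sub (hconst.sub hphi)).abs)
  have hle := le_of_tendsto htend
    (Filter.Eventually.of_forall fun n => partial_bound hx0 hx1 hm n)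
  simpa using hle

lemma final_abs {M t : ℝ} (hM : 1 ≤ M) (ht0 : 0 < t) (ht4 : t < 1 / 4) :
    |16 * t ^ 2 * M ^ 2 / 15 - 64 * t ^ 3 * M ^ 4 / 45| ≤ M ^ 4 * (4 * t) ^ 2 := by
  have h1m : (1 : ℝ) ≤ M ^ 2 := by nlinarith
  have hmm : M ^ 2 ≤ M ^ 4 := by nlinarith [mul_le_mul_of_nonneg_left h1m (sq_nonneg M)]
  have hm4 : (0 : ℝ) ≤ M ^ 4 := by nlinarith
  have htt : (0 : ℝ) ≤ t ^ 2 := sq_nonneg t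
  have h64 : 64 * t ^ 3 * M ^ 4 ≤ 16 * t ^ 2 * M ^ 4 := by
    nlinarith [mul_nonneg htt hm4]
  have hA1 : 16 * t ^ 2 * M ^ 2 / 15 ≤ 16 * t ^ 2 * M ^ 4 := by
    nlinarith [mul_le_mul_of_nonneg_left hmm (by positivity : (0:ℝ) ≤ 16 * t ^ 2)]
  rw [abs_le]
  constructor
  · nlinarith [mul_nonneg htt hm4, mul_nonneg (mul_nonneg htt hm4) ht0.le]
  · nlinarith

end ThetaAsym

/-- Two-term asymptotic expansion of the theta-like sum as `t → 0⁺`: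
`∑_{k=m}^∞ 2k e^{-4tk²} = e^{-4m²t}(1/(4t) + (m - 1/6) + t(4m²/3 - 1/15)) + O(t²)`.
The sum over `k ≥ m` is indexed by `k = m + j`, `j : ℕ`. -/
theorem thetaSum_asymptotic (m : ℕ) (hm : 1 ≤ m) :
    (fun t : ℝ =>
        (∑' j : ℕ, 2 * ((m : ℝ) + j) * Real.exp (-4 * t * ((m : ℝ) + j) ^ 2))
          - Real.exp (-4 * (m : ℝ) ^ 2 * t) *
              (1 / (4 * t) + ((m : ℝ) - 1 / 6) + t * (4 / 3 * (m : ℝ) ^ 2 - 1 / 15)))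
      =O[nhdsWithin 0 (Set.Ioi 0)] fun t : ℝ => t ^ 2 := by
  rw [Asymptotics.isBigO_iff]
  refine ⟨16 * (9600000 + (m : ℝ) ^ 4), ?_⟩
  filter_upwards [Ioo_mem_nhdsGT_of_mem (by norm_num : (0:ℝ) ∈ Set.Ico 0 (1/4))] with t ht
  obtain ⟨ht0, ht4⟩ := ht
  have hm1 : (1 : ℝ) ≤ (m : ℝ) := by exact_mod_cast hm
  set x := 4 * t with hx
  have hx0 : 0 < x := by rw [hx]; linarith
  have hx1 : x ≤ 1 := by rw [hx]; linarith
  have hcast : (∑' j : ℕ, 2 * ((m : ℝ) + j) * Real.exp (-4 * t * ((m : ℝ) + j) ^ 2))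
      = (∑' j : ℕ, 2 * ((m : ℝ) + j) * Real.exp (-(x * ((m : ℝ) + j) ^ 2))) := by
    apply tsum_congr
    intro j
    congr 2
    rw [hx]; ring
  have h1 := ThetaAsym.key hx0 hx1 hm
  have ht0' : t ≠ 0 := ne_of_gt ht0
  have hD : ThetaAsym.Phi0 x m - Real.exp (-4 * (m : ℝ) ^ 2 * t) *
      (1 / (4 * t) + ((m : ℝ) - 1 / 6) + t * (4 / 3 * (m : ℝ) ^ 2 - 1 / 15))
      = Real.exp (-4 * (m : ℝ) ^ 2 * t)
        * (16 * t ^ 2 * (m : ℝ) ^ 2 / 15 - 64 * t ^ 3 * (m : ℝ) ^ 4 / 45) := by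
    rw [ThetaAsym.Phi0, hx]
    rw [show -(4 * t * ((m : ℝ)) ^ 2) = -4 * (m : ℝ) ^ 2 * t by ring]
    rw [← mul_sub]
    congr 1
    simp [ThetaAsym.P, ThetaAsym.l0, ThetaAsym.mono]
    field_simp
    ring
  have h2 : |ThetaAsym.Phi0 x m - Real.exp (-4 * (m : ℝ) ^ 2 * t) *
      (1 / (4 * t) + ((m : ℝ) - 1 / 6) + t * (4 / 3 * (m : ℝ) ^ 2 - 1 / 15))|
      ≤ (m : ℝ) ^ 4 * x ^ 2 := by
    rw [hD, abs_mul, abs_of_pos (Real.exp_pos _)]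
    have hexple : Real.exp (-4 * (m : ℝ) ^ 2 * t) ≤ 1 :=
      Real.exp_le_one_iff.mpr (by nlinarith)
    have habs : |16 * t ^ 2 * (m : ℝ) ^ 2 / 15 - 64 * t ^ 3 * (m : ℝ) ^ 4 / 45|
        ≤ (m : ℝ) ^ 4 * x ^ 2 := by
      rw [hx]
      exact ThetaAsym.final_abs hm1 ht0 ht4
    calc Real.exp (-4 * (m : ℝ) ^ 2 * t)
          * |16 * t ^ 2 * (m : ℝ) ^ 2 / 15 - 64 * t ^ 3 * (m : ℝ) ^ 4 / 45|
        ≤ 1 * ((m : ℝ) ^ 4 * x ^ 2) :=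
          mul_le_mul hexple habs (abs_nonneg _) (by norm_num)
      _ = (m : ℝ) ^ 4 * x ^ 2 := by ring
  rw [Real.norm_eq_abs, Real.norm_eq_abs, hcast]
  have htri : |(∑' j : ℕ, 2 * ((m : ℝ) + j) * Real.exp (-(x * ((m : ℝ) + j) ^ 2)))
      - Real.exp (-4 * (m : ℝ) ^ 2 * t) *
        (1 / (4 * t) + ((m : ℝ) - 1 / 6) + t * (4 / 3 * (m : ℝ) ^ 2 - 1 / 15))|
      ≤ 9600000 * x ^ 2 + (m : ℝ) ^ 4 * x ^ 2 := by
    calc |(∑' j : ℕ, 2 * ((m : ℝ) + j) * Real.exp (-(x * ((m : ℝ) + j) ^ 2)))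
        - Real.exp (-4 * (m : ℝ) ^ 2 * t) *
          (1 / (4 * t) + ((m : ℝ) - 1 / 6) + t * (4 / 3 * (m : ℝ) ^ 2 - 1 / 15))|
        = |((∑' j : ℕ, 2 * ((m : ℝ) + j) * Real.exp (-(x * ((m : ℝ) + j) ^ 2)))
            - ThetaAsym.Phi0 x m)
          + (ThetaAsym.Phi0 x m - Real.exp (-4 * (m : ℝ) ^ 2 * t) *
            (1 / (4 * t) + ((m : ℝ) - 1 / 6) + t * (4 / 3 * (m : ℝ) ^ 2 - 1 / 15)))| := by
          congr 1; ring
      _ ≤ _ + _ := abs_add_le _ _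
      _ ≤ 9600000 * x ^ 2 + (m : ℝ) ^ 4 * x ^ 2 := add_le_add h1 h2
  calc |(∑' j : ℕ, 2 * ((m : ℝ) + j) * Real.exp (-(x * ((m : ℝ) + j) ^ 2)))
      - Real.exp (-4 * (m : ℝ) ^ 2 * t) *
        (1 / (4 * t) + ((m : ℝ) - 1 / 6) + t * (4 / 3 * (m : ℝ) ^ 2 - 1 / 15))|
      ≤ 9600000 * x ^ 2 + (m : ℝ) ^ 4 * x ^ 2 := htri
    _ = 16 * (9600000 + (m : ℝ) ^ 4) * t ^ 2 := by rw [hx]; ring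
    _ = 16 * (9600000 + (m : ℝ) ^ 4) * |t ^ 2| := by
        rw [abs_of_nonneg (sq_nonneg t)]
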